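/- Let E: y² = x³ + a₂x² + a₄x + a₆ = F(x) be an elliptic curve over a field K of characteristic 0, and let θ be the class of x in M = K[x]/(F(x)). If e₁, e₂, e₃ are points of E(K) with e₁ + e₂ + e₃ = 0 (the group law) and F(x(eᵢ)) ≠ 0 for each i, then the product (x(e₁) − θ)(x(e₂) − θ)(x(e₃) − θ) is a square in M. -/

import Mathlib

open Polynomial

open scoped Classical in
/-- Let `E : y² = x³ + a₂x² + a₄x + a₆ = F(x)` be an elliptic curve over a field
`K` of characteristic 0, and `θ` the class of `x` in `M = K[x]/(F)`. If `e₁, e₂, e₃ ∈ E(K)`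
satisfy `e₁ + e₂ + e₃ = 0` and `F(x(eᵢ)) ≠ 0` for each `i`, then
`(x(e₁) − θ)(x(e₂) − θ)(x(e₃) − θ)` is a square in `M`. -/
theorem stmt_5 (K : Type*) [Field K] [CharZero K] (a₂ a₄ a₆ : K)
    (W : WeierstrassCurve.Affine K)
    (hW : W = { a₁ := 0, a₂ := a₂, a₃ := 0, a₄ := a₄, a₆ := a₆ })
    (F : Polynomial K) (hF : F = X ^ 3 + C a₂ * X ^ 2 + C a₄ * X + C a₆)
    (x₁ y₁ x₂ y₂ x₃ y₃ : K)
    (h₁ : W.Nonsingular x₁ y₁) (h₂ : W.Nonsingular x₂ y₂) (h₃ : W.Nonsingular x₃ y₃)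
    (hsum : (WeierstrassCurve.Affine.Point.some _ _ h₁ : W.Point) +
        WeierstrassCurve.Affine.Point.some _ _ h₂ + WeierstrassCurve.Affine.Point.some _ _ h₃ = 0)
    (hx₁ : F.eval x₁ ≠ 0) (hx₂ : F.eval x₂ ≠ 0) (hx₃ : F.eval x₃ ≠ 0) :
    ∃ m : AdjoinRoot F,
      (algebraMap K (AdjoinRoot F) x₁ - AdjoinRoot.root F) *
          (algebraMap K (AdjoinRoot F) x₂ - AdjoinRoot.root F) *
            (algebraMap K (AdjoinRoot F) x₃ - AdjoinRoot.root F) = m ^ 2 := by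
  have hxy : x₁ = x₂ → y₁ ≠ W.negY x₂ y₂ := by
    intro hx hy
    rw [WeierstrassCurve.Affine.Point.add_of_Y_eq hx hy, zero_add] at hsum
    exact WeierstrassCurve.Affine.Point.some_ne_zero h₃ hsum
  rw [WeierstrassCurve.Affine.Point.add_some (fun h => hxy h.1 h.2)] at hsum
  have hPQ := eq_neg_of_add_eq_zero_left hsum
  rw [WeierstrassCurve.Affine.Point.neg_some] at hPQ
  injection hPQ with hx3 hrest
  set ℓ := W.slope x₁ x₂ y₁ y₂ with hℓ
  have key := WeierstrassCurve.Affine.addPolynomial_slope h₁.1 h₂.1 (fun h => hxy h.1 h.2)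
  have hAP : W.addPolynomial x₁ y₁ ℓ = (C ℓ * (X - C x₁) + C y₁) ^ 2 - F := by
    rw [WeierstrassCurve.Affine.addPolynomial, WeierstrassCurve.Affine.linePolynomial,
      WeierstrassCurve.Affine.polynomial, hF, hW]
    simp only [Polynomial.eval_add, Polynomial.eval_sub, Polynomial.eval_mul,
      Polynomial.eval_pow, Polynomial.eval_C, Polynomial.eval_X, Polynomial.C_0]
    ring
  rw [hAP, ← hℓ, hx3] at key
  have hF0 : (Polynomial.aeval (AdjoinRoot.root F)) F = 0 := by
    rw [AdjoinRoot.aeval_eq, AdjoinRoot.mk_self]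
  have hkey := congrArg (Polynomial.aeval (AdjoinRoot.root F)) key
  simp only [map_sub, map_pow, map_add, map_mul, map_neg, Polynomial.aeval_X,
    Polynomial.aeval_C, hF0] at hkey
  refine ⟨algebraMap K (AdjoinRoot F) ℓ *
    (AdjoinRoot.root F - algebraMap K (AdjoinRoot F) x₁) + algebraMap K (AdjoinRoot F) y₁, ?_⟩
  linear_combination -hkey
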